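/- For any weighted graph H = (V', E', w') with nonnegative edge weights, the optimal value of the densest-subgraph LP equals the maximum subgraph density: sup over LP-feasible (x, y) of ∑_{{i,j}∈E'} w'_{ij} x_{ij} = max over nonempty V'' ⊆ V' of (∑_{{i,j}∈E', i,j∈V''} w'_{ij}) / |V''|. -/

import Mathlib

open scoped BigOperators
open Finset

private lemma edge_eq {m : ℕ} (w : Fin m → Fin m → ℝ) (S : Finset (Fin m)) :
    (∑ i, ∑ j ∈ Finset.univ.filter (fun j => i < j),
      (if i ∈ S ∧ j ∈ S then w i j else 0))
    = ∑ i ∈ S, ∑ j ∈ S.filter (fun j => i < j), w i j := by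
  rw [← Finset.sum_subset (Finset.subset_univ S)
      (fun i _ hiS => Finset.sum_eq_zero (fun j _ => by simp [hiS]))]
  refine Finset.sum_congr rfl (fun i hiS => ?_)
  rw [← Finset.sum_subset
      (Finset.filter_subset_filter _ (Finset.subset_univ S)) (fun j hj hjS => ?_)]
  · exact Finset.sum_congr rfl (fun j hj => by
      simp only [Finset.mem_filter] at hj
      simp [hiS, hj.1])
  · simp only [Finset.mem_filter, Finset.mem_univ, true_and] at hj
    have hjS' : j ∉ S := fun h => hjS (Finset.mem_filter.mpr ⟨h, hj⟩)
    simp [hjS']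

private lemma key_aux {m : ℕ} (w : Fin m → Fin m → ℝ) (hw : ∀ i j, 0 ≤ w i j)
    (ρ : ℝ)
    (hρ : ∀ S : Finset (Fin m), S.Nonempty →
      (∑ i ∈ S, ∑ j ∈ S.filter (fun j => i < j), w i j) ≤ ρ * S.card) :
    ∀ n (y : Fin m → ℝ), (∀ i, 0 ≤ y i) →
      (Finset.univ.filter (fun i => 0 < y i)).card ≤ n →
      (∑ i, ∑ j ∈ Finset.univ.filter (fun j => i < j), w i j * min (y i) (y j))
        ≤ ρ * ∑ i, y i := by
  intro n
  induction n with
  | zero =>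
    intro y hy hcard
    have hzero : ∀ i, y i = 0 := by
      intro i
      by_contra h
      have h1 : 0 < y i := lt_of_le_of_ne (hy i) (Ne.symm h)
      have h2 : i ∈ Finset.univ.filter (fun i => 0 < y i) := by simp [h1]
      have := Finset.card_pos.mpr ⟨i, h2⟩
      omega
    simp [hzero]
  | succ n ih =>
    intro y hy hcard
    set S := Finset.univ.filter (fun i => 0 < y i) with hS
    by_cases hSne : S.Nonempty
    · obtain ⟨i0, hi0S, hmin⟩ := S.exists_min_image y hSne
      set t := y i0 with ht
      have ht0 : 0 < t := (Finset.mem_filter.mp hi0S).2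
      have htle : ∀ i, 0 < y i → t ≤ y i := fun i hi =>
        hmin i (Finset.mem_filter.mpr ⟨Finset.mem_univ i, hi⟩)
      set y' : Fin m → ℝ := fun i => if 0 < y i then y i - t else 0 with hy'def
      have hy' : ∀ i, 0 ≤ y' i := by
        intro i
        simp only [hy'def]
        split_ifs with h
        · linarith [htle i h]
        · exact le_rfl
      have hy'i0 : y' i0 = 0 := by simp [hy'def, ht0]; intro _; simp [ht]
      have hsupp : (Finset.univ.filter (fun i => 0 < y' i)) ⊆ S.erase i0 := by
        intro i hi
        simp only [Finset.mem_filter, Finset.mem_univ, true_and] at hi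
        have hyi : 0 < y i := by
          by_contra h
          simp [hy'def, h] at hi
        refine Finset.mem_erase.mpr ⟨?_, Finset.mem_filter.mpr ⟨Finset.mem_univ i, hyi⟩⟩
        intro h
        rw [h] at hi
        rw [hy'i0] at hi
        exact absurd hi (lt_irrefl 0)
      have hcard' : (Finset.univ.filter (fun i => 0 < y' i)).card ≤ n := by
        have h1 := Finset.card_le_card hsupp
        have h2 := Finset.card_erase_of_mem hi0S
        omega
      -- pointwise identity
      have hpt : ∀ i j : Fin m, w i j * min (y i) (y j)
          = w i j * min (y' i) (y' j) + t * (if i ∈ S ∧ j ∈ S then w i j else 0) := by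
        intro i j
        have hiS : i ∈ S ↔ 0 < y i := by simp [hS]
        have hjS : j ∈ S ↔ 0 < y j := by simp [hS]
        by_cases hi : 0 < y i
        · by_cases hj : 0 < y j
          · have : (i ∈ S ∧ j ∈ S) := ⟨hiS.mpr hi, hjS.mpr hj⟩
            rw [if_pos this]
            simp only [hy'def, if_pos hi, if_pos hj]
            rw [min_sub_sub_right]
            ring
          · have hyj : y j = 0 := le_antisymm (not_lt.mp hj) (hy j)
            have : ¬(i ∈ S ∧ j ∈ S) := fun h => hj (hjS.mp h.2)
            rw [if_neg this]
            have h1 : min (y i) (y j) = 0 := by rw [hyj]; exact min_eq_right (hy i)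
            have h2 : min (y' i) (y' j) = 0 := by
              have : y' j = 0 := by simp [hy'def, hj]
              rw [this]; exact min_eq_right (hy' i)
            rw [h1, h2]; ring
        · have hyi : y i = 0 := le_antisymm (not_lt.mp hi) (hy i)
          have : ¬(i ∈ S ∧ j ∈ S) := fun h => hi (hiS.mp h.1)
          rw [if_neg this]
          have h1 : min (y i) (y j) = 0 := by rw [hyi]; exact min_eq_left (hy j)
          have h2 : min (y' i) (y' j) = 0 := by
            have : y' i = 0 := by simp [hy'def, hi]
            rw [this]; exact min_eq_left (hy' j)
          rw [h1, h2]; ring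
      -- sum of y splits
      have hysum : ∑ i, y i = (∑ i, y' i) + t * S.card := by
        have : ∀ i : Fin m, y i = y' i + (if i ∈ S then t else 0) := by
          intro i
          by_cases hi : 0 < y i
          · have hiS : i ∈ S := by simp [hS, hi]
            simp [hy'def, hi, hiS]
          · have hyi : y i = 0 := le_antisymm (not_lt.mp hi) (hy i)
            have hiS : i ∉ S := by simp [hS, hi]
            simp [hy'def, hi, hiS, hyi]
        rw [Finset.sum_congr rfl (fun i _ => this i), Finset.sum_add_distrib]
        congr 1
        rw [Finset.sum_ite_mem, Finset.univ_inter, Finset.sum_const, nsmul_eq_mul]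
        ring
      calc ∑ i, ∑ j ∈ Finset.univ.filter (fun j => i < j), w i j * min (y i) (y j)
          = (∑ i, ∑ j ∈ Finset.univ.filter (fun j => i < j), w i j * min (y' i) (y' j))
            + t * (∑ i ∈ S, ∑ j ∈ S.filter (fun j => i < j), w i j) := by
            rw [← edge_eq w S, Finset.mul_sum]
            rw [← Finset.sum_add_distrib]
            refine Finset.sum_congr rfl (fun i _ => ?_)
            rw [Finset.mul_sum, ← Finset.sum_add_distrib]
            exact Finset.sum_congr rfl (fun j _ => hpt i j)
        _ ≤ ρ * (∑ i, y' i) + t * (ρ * S.card) := by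
            refine add_le_add (ih y' hy' hcard') ?_
            exact mul_le_mul_of_nonneg_left (hρ S hSne) (le_of_lt ht0)
        _ = ρ * ∑ i, y i := by rw [hysum]; ring
    · have hzero : ∀ i, y i = 0 := by
        intro i
        by_contra h
        exact hSne ⟨i, Finset.mem_filter.mpr ⟨Finset.mem_univ i,
          lt_of_le_of_ne (hy i) (Ne.symm h)⟩⟩
      simp [hzero]

theorem charikar_lp_eq_max_density
    (m : ℕ) (hm : 0 < m)
    (w : Fin m → Fin m → ℝ) (hw : ∀ i j, 0 ≤ w i j) :
    sSup {v : ℝ | ∃ (x : Fin m → Fin m → ℝ) (y : Fin m → ℝ),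
        (∀ i j, i < j → 0 ≤ x i j) ∧ (∀ i, 0 ≤ y i) ∧
        (∀ i j, i < j → x i j ≤ y i) ∧ (∀ i j, i < j → x i j ≤ y j) ∧
        (∑ i, y i ≤ 1) ∧
        v = ∑ i, ∑ j ∈ Finset.univ.filter (fun j => i < j), w i j * x i j} =
    sSup {v : ℝ | ∃ V'' : Finset (Fin m), V''.Nonempty ∧
        v = (∑ i ∈ V'', ∑ j ∈ V''.filter (fun j => i < j), w i j) / (V''.card : ℝ)} := by
  haveI : Nonempty (Fin m) := ⟨⟨0, hm⟩⟩
  set D := {v : ℝ | ∃ V'' : Finset (Fin m), V''.Nonempty ∧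
      v = (∑ i ∈ V'', ∑ j ∈ V''.filter (fun j => i < j), w i j) / (V''.card : ℝ)} with hD
  set L := {v : ℝ | ∃ (x : Fin m → Fin m → ℝ) (y : Fin m → ℝ),
      (∀ i j, i < j → 0 ≤ x i j) ∧ (∀ i, 0 ≤ y i) ∧
      (∀ i j, i < j → x i j ≤ y i) ∧ (∀ i j, i < j → x i j ≤ y j) ∧
      (∑ i, y i ≤ 1) ∧
      v = ∑ i, ∑ j ∈ Finset.univ.filter (fun j => i < j), w i j * x i j} with hL
  have hDfin : D.Finite := by
    apply Set.Finite.subset (Set.finite_range (fun V'' : Finset (Fin m) =>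
      (∑ i ∈ V'', ∑ j ∈ V''.filter (fun j => i < j), w i j) / (V''.card : ℝ)))
    rintro v ⟨V'', _, rfl⟩
    exact ⟨V'', rfl⟩
  have hDne : D.Nonempty := by
    refine ⟨_, Finset.univ, Finset.univ_nonempty, rfl⟩
  set ρ := sSup D with hρdef
  have hρmem : ρ ∈ D := hDne.csSup_mem hDfin
  have hρub : ∀ v ∈ D, v ≤ ρ := fun v hv => le_csSup hDfin.bddAbove hv
  have hρ0 : 0 ≤ ρ := by
    obtain ⟨V'', hne, hv⟩ := hρmem
    rw [hv]
    apply div_nonneg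
    · exact Finset.sum_nonneg fun i _ => Finset.sum_nonneg fun j _ => hw i j
    · exact Nat.cast_nonneg _
  have hρS : ∀ S : Finset (Fin m), S.Nonempty →
      (∑ i ∈ S, ∑ j ∈ S.filter (fun j => i < j), w i j) ≤ ρ * S.card := by
    intro S hSne
    have hc : (0:ℝ) < S.card := by exact_mod_cast Finset.card_pos.mpr hSne
    have := hρub _ ⟨S, hSne, rfl⟩
    exact (div_le_iff₀ hc).mp this
  -- membership lemma: every density value is attained by the LP
  have hDsubL : D ⊆ L := by
    rintro v ⟨V'', hVne, rfl⟩
    have hc : (0:ℝ) < V''.card := by exact_mod_cast Finset.card_pos.mpr hVne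
    refine ⟨fun i j => if i ∈ V'' ∧ j ∈ V'' then 1 / V''.card else 0,
      fun i => if i ∈ V'' then 1 / V''.card else 0, ?_, ?_, ?_, ?_, ?_, ?_⟩
    · intro i j _; positivity
    · intro i; positivity
    · intro i j _
      by_cases h : i ∈ V'' ∧ j ∈ V''
      · simp [h, h.1]
      · simp only [if_neg h]
        positivity
    · intro i j _
      by_cases h : i ∈ V'' ∧ j ∈ V''
      · simp [h, h.2]
      · simp only [if_neg h]
        positivity
    · rw [Finset.sum_ite_mem, Finset.univ_inter, Finset.sum_const, nsmul_eq_mul]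
      rw [mul_one_div, div_self (ne_of_gt hc)]
    · rw [div_eq_mul_one_div, ← edge_eq w V'', Finset.sum_mul]
      refine Finset.sum_congr rfl (fun i _ => ?_)
      rw [Finset.sum_mul]
      refine Finset.sum_congr rfl (fun j _ => ?_)
      by_cases h : i ∈ V'' ∧ j ∈ V'' <;> simp [h]
  have hLne : L.Nonempty := hDne.mono hDsubL
  have hLub : ∀ v ∈ L, v ≤ ρ := by
    rintro v ⟨x, y, hx0, hy0, hxy1, hxy2, hysum, rfl⟩
    have step1 : ∑ i, ∑ j ∈ Finset.univ.filter (fun j => i < j), w i j * x i j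
        ≤ ∑ i, ∑ j ∈ Finset.univ.filter (fun j => i < j), w i j * min (y i) (y j) := by
      refine Finset.sum_le_sum (fun i _ => Finset.sum_le_sum (fun j hj => ?_))
      simp only [Finset.mem_filter, Finset.mem_univ, true_and] at hj
      exact mul_le_mul_of_nonneg_left (le_min (hxy1 i j hj) (hxy2 i j hj)) (hw i j)
    have step2 := key_aux w hw ρ hρS
      (Finset.univ.filter (fun i => 0 < y i)).card y hy0 le_rfl
    calc ∑ i, ∑ j ∈ Finset.univ.filter (fun j => i < j), w i j * x i j
        ≤ ρ * ∑ i, y i := le_trans step1 step2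
      _ ≤ ρ * 1 := mul_le_mul_of_nonneg_left hysum hρ0
      _ = ρ := mul_one ρ
  refine le_antisymm (csSup_le hLne hLub) (csSup_le_csSup ⟨ρ, hLub⟩ hDne hDsubL)
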